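/- Let (E,ℰ) be a measurable space and let (P_μ)_{μ∈𝒫(E)} be a nonlinear Markov chain whose two-step kernel Q satisfies conditions (C1) and (C2). Then for all μ, ν ∈ 𝒫(E), ‖μQ_μ − νQ_ν‖_TV ≤ ‖μ − ν‖_TV · (1 − α₂ + λ₂ − (λ₂/2)‖μ − ν‖_TV). -/

import Mathlib

open MeasureTheory ProbabilityTheory

/-- Total variation distance `‖μ − ν‖_TV = 2 sup_{A ∈ ℰ} |μ(A) − ν(A)|`. -/
noncomputable def tvDist {E : Type*} [MeasurableSpace E] (μ ν : Measure E) : ℝ :=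
  2 * ⨆ A : {s : Set E // MeasurableSet s}, |(μ A).toReal - (ν A).toReal|

/-- One step of the nonlinear chain: `μ ↦ μ P_μ`, `(νP_μ)(B) = ∫ P_μ(x,B) ν(dx)`. -/
noncomputable def stepMeasure {E : Type*} [MeasurableSpace E]
    (P : Measure E → Kernel E E) (μ : Measure E) : Measure E :=
  μ.bind (fun x => P μ x)

/-- Two-step transition kernel `Q_μ(x,B) = ∫ P_μ(x,dy) P_{μP_μ}(y,B)`. -/
noncomputable def twoStepKernel {E : Type*} [MeasurableSpace E]
    (P : Measure E → Kernel E E) (μ : Measure E) (x : E) : Measure E :=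
  (P μ x).bind (fun y => P (stepMeasure P μ) y)

/-- Marginal distributions `μ_{n+1} = μ_n P_{μ_n}` of the nonlinear Markov chain. -/
noncomputable def marginal {E : Type*} [MeasurableSpace E]
    (P : Measure E → Kernel E E) (μ0 : Measure E) : ℕ → Measure E
  | 0 => μ0
  | n + 1 => stepMeasure P (marginal P μ0 n)

/-- under (C1) and (C2) for the two-step kernel,
`‖μQ_μ − νQ_ν‖_TV ≤ ‖μ − ν‖_TV (1 − α₂ + λ₂ − (λ₂/2)‖μ − ν‖_TV)`. -/
lemma tvAux_bdd {E : Type*} [MeasurableSpace E] (p q : Measure E)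
    [IsProbabilityMeasure p] [IsProbabilityMeasure q] :
    BddAbove (Set.range fun A : {s : Set E // MeasurableSet s} =>
      |(p A).toReal - (q A).toReal|) := by
  refine ⟨1, ?_⟩
  rintro r ⟨A, rfl⟩
  have h1 : (p (A : Set E)).toReal ≤ 1 := by
    simpa using ENNReal.toReal_mono (by simp) (prob_le_one (μ := p) (s := A))
  have h2 : (q (A : Set E)).toReal ≤ 1 := by
    simpa using ENNReal.toReal_mono (by simp) (prob_le_one (μ := q) (s := A))
  have h3 : 0 ≤ (p (A : Set E)).toReal := ENNReal.toReal_nonneg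
  have h4 : 0 ≤ (q (A : Set E)).toReal := ENNReal.toReal_nonneg
  rw [abs_le]; constructor <;> linarith

lemma tvAux_abs_le {E : Type*} [MeasurableSpace E] (p q : Measure E)
    [IsProbabilityMeasure p] [IsProbabilityMeasure q] {A : Set E} (hA : MeasurableSet A) :
    |(p A).toReal - (q A).toReal| ≤ tvDist p q / 2 := by
  have := le_ciSup (tvAux_bdd p q) (⟨A, hA⟩ : {s : Set E // MeasurableSet s})
  simp only [tvDist]
  linarith

lemma integrable_of_abs_le_one {E : Type*} [MeasurableSpace E] {f : E → ℝ}
    (hf : Measurable f) (h : ∀ x, |f x| ≤ 1) (ρ : Measure E) [IsFiniteMeasure ρ] :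
    Integrable f ρ :=
  (integrable_const 1).mono' hf.aestronglyMeasurable (ae_of_all _ h)


theorem two_step_contraction_general
    {E : Type*} [MeasurableSpace E]
    (P : Measure E → Kernel E E) (hP : ∀ μ, IsMarkovKernel (P μ))
    (α₂ lam₂ : ℝ) (hα₂0 : 0 < α₂) (hα₂1 : α₂ < 1)
    (hlam₂0 : 0 ≤ lam₂) (hlam₂α : lam₂ ≤ α₂)
    (C1 : ∀ (μ ν : Measure E), IsProbabilityMeasure μ → IsProbabilityMeasure ν →
      ∀ x y : E, tvDist (twoStepKernel P μ x) (twoStepKernel P ν y) ≤ 2 * (1 - α₂))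
    (C2 : ∀ (μ ν : Measure E), IsProbabilityMeasure μ → IsProbabilityMeasure ν →
      ∀ x : E, tvDist (twoStepKernel P μ x) (twoStepKernel P ν x) ≤ lam₂ * tvDist μ ν)
    (μ ν : Measure E) (hμ : IsProbabilityMeasure μ) (hν : IsProbabilityMeasure ν) :
    tvDist (μ.bind (twoStepKernel P μ)) (ν.bind (twoStepKernel P ν)) ≤
      tvDist μ ν * (1 - α₂ + lam₂ - (lam₂ / 2) * tvDist μ ν) := by
  classical
  haveI := hP μ; haveI := hP ν
  haveI := hP (stepMeasure P μ); haveI := hP (stepMeasure P ν)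
  obtain ⟨Qμ, hQμdef⟩ : ∃ Q : Kernel E E, Q = (P (stepMeasure P μ)) ∘ₖ (P μ) := ⟨_, rfl⟩
  obtain ⟨Qν, hQνdef⟩ : ∃ Q : Kernel E E, Q = (P (stepMeasure P ν)) ∘ₖ (P ν) := ⟨_, rfl⟩
  haveI : IsMarkovKernel Qμ := by rw [hQμdef]; infer_instance
  haveI : IsMarkovKernel Qν := by rw [hQνdef]; infer_instance
  have hQμ : twoStepKernel P μ = fun x => Qμ x :=
    funext fun x => hQμdef ▸ (Kernel.comp_apply _ _ _).symm
  have hQν : twoStepKernel P ν = fun x => Qν x :=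
    funext fun x => hQνdef ▸ (Kernel.comp_apply _ _ _).symm
  -- Hahn decomposition
  obtain ⟨S, hS, hSpos, hSneg⟩ := hahn_decomposition (μ := μ) (ν := ν)
  obtain ⟨d, hd⟩ : ∃ r : ℝ, r = (μ S).toReal - (ν S).toReal := ⟨_, rfl⟩
  have hνSle : ν S ≤ μ S := hSpos S hS subset_rfl
  have hd0 : 0 ≤ d := by
    have := ENNReal.toReal_mono (measure_ne_top μ S) hνSle
    rw [hd]; linarith
  -- real arithmetic facts
  have hcompl : ∀ (ρ : Measure E), IsProbabilityMeasure ρ →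
      (ρ S).toReal + (ρ Sᶜ).toReal = 1 := by
    intro ρ hρ
    rw [← ENNReal.toReal_add (measure_ne_top _ _) (measure_ne_top _ _)]
    have h := measure_inter_add_diff (μ := ρ) Set.univ hS
    rw [Set.univ_inter, ← Set.compl_eq_univ_diff] at h
    rw [h, measure_univ, ENNReal.toReal_one]
  -- key pointwise bound for tvDist μ ν
  have key : ∀ A : Set E, MeasurableSet A → |(μ A).toReal - (ν A).toReal| ≤ d := by
    intro A hA
    have e1 : (μ (A ∩ S)).toReal + (μ (A \ S)).toReal = (μ A).toReal := by
      rw [← ENNReal.toReal_add (measure_ne_top _ _) (measure_ne_top _ _),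
        measure_inter_add_diff A hS]
    have e2 : (ν (A ∩ S)).toReal + (ν (A \ S)).toReal = (ν A).toReal := by
      rw [← ENNReal.toReal_add (measure_ne_top _ _) (measure_ne_top _ _),
        measure_inter_add_diff A hS]
    have e3 : (μ (S ∩ A)).toReal + (μ (S \ A)).toReal = (μ S).toReal := by
      rw [← ENNReal.toReal_add (measure_ne_top _ _) (measure_ne_top _ _),
        measure_inter_add_diff S hA]
    have e4 : (ν (S ∩ A)).toReal + (ν (S \ A)).toReal = (ν S).toReal := by
      rw [← ENNReal.toReal_add (measure_ne_top _ _) (measure_ne_top _ _),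
        measure_inter_add_diff S hA]
    have e5 : (μ (Sᶜ ∩ A)).toReal + (μ (Sᶜ \ A)).toReal = (μ Sᶜ).toReal := by
      rw [← ENNReal.toReal_add (measure_ne_top _ _) (measure_ne_top _ _),
        measure_inter_add_diff Sᶜ hA]
    have e6 : (ν (Sᶜ ∩ A)).toReal + (ν (Sᶜ \ A)).toReal = (ν Sᶜ).toReal := by
      rw [← ENNReal.toReal_add (measure_ne_top _ _) (measure_ne_top _ _),
        measure_inter_add_diff Sᶜ hA]
    have eAS : A ∩ S = S ∩ A := Set.inter_comm _ _
    have eAS' : A \ S = Sᶜ ∩ A := by ext x; simp [Set.diff_eq, Set.inter_comm, And.comm]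
    have i1 : (ν (S ∩ A)).toReal ≤ (μ (S ∩ A)).toReal :=
      ENNReal.toReal_mono (measure_ne_top _ _)
        (hSpos _ ((hS.inter hA)) Set.inter_subset_left)
    have i2 : (ν (S \ A)).toReal ≤ (μ (S \ A)).toReal :=
      ENNReal.toReal_mono (measure_ne_top _ _)
        (hSpos _ (hS.diff hA) (Set.diff_subset))
    have i3 : (μ (Sᶜ ∩ A)).toReal ≤ (ν (Sᶜ ∩ A)).toReal :=
      ENNReal.toReal_mono (measure_ne_top _ _)
        (hSneg _ (hS.compl.inter hA) Set.inter_subset_left)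
    have i4 : (μ (Sᶜ \ A)).toReal ≤ (ν (Sᶜ \ A)).toReal :=
      ENNReal.toReal_mono (measure_ne_top _ _)
        (hSneg _ (hS.compl.diff hA) (Set.diff_subset))
    have c1 := hcompl μ hμ
    have c2 := hcompl ν hν
    rw [eAS, eAS'] at e1 e2
    rw [abs_le]
    constructor <;> rw [hd] <;> linarith
  -- tvDist μ ν = 2 d
  have hbdd := tvAux_bdd μ ν
  have htv : tvDist μ ν = 2 * d := by
    simp only [tvDist]
    congr 1
    apply le_antisymm
    · exact ciSup_le fun A => key A A.2
    · have := le_ciSup hbdd (⟨S, hS⟩ : {s : Set E // MeasurableSet s})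
      calc d = |(μ S).toReal - (ν S).toReal| := by
            rw [abs_of_nonneg (hd ▸ hd0), hd]
        _ ≤ _ := this
  -- case d = 0 : μ = ν
  by_cases hdz : d = 0
  · have hμν : μ = ν := by
      ext A hA
      have h := key A hA
      rw [hdz, abs_nonpos_iff, sub_eq_zero] at h
      exact (ENNReal.toReal_eq_toReal_iff' (measure_ne_top _ _) (measure_ne_top _ _)).mp h
    subst hμν
    have : tvDist (μ.bind (twoStepKernel P μ)) (μ.bind (twoStepKernel P μ)) = 0 := by
      simp [tvDist, ciSup_const]
    rw [this, htv, hdz]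
    ring_nf
    norm_num
  have hdpos : 0 < d := lt_of_le_of_ne hd0 (Ne.symm hdz)
  -- the decomposition measures
  obtain ⟨σ₁, hσ₁def⟩ : ∃ m : Measure E, m = μ.restrict S - ν.restrict S := ⟨_, rfl⟩
  obtain ⟨σ₂, hσ₂def⟩ : ∃ m : Measure E, m = ν.restrict Sᶜ - μ.restrict Sᶜ := ⟨_, rfl⟩
  haveI : IsFiniteMeasure σ₁ := by rw [hσ₁def]; infer_instance
  haveI : IsFiniteMeasure σ₂ := by rw [hσ₂def]; infer_instance
  have hle₁ : ν.restrict S ≤ μ.restrict S := by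
    rw [Measure.le_iff]
    intro t ht
    rw [Measure.restrict_apply ht, Measure.restrict_apply ht]
    exact hSpos _ (ht.inter hS) Set.inter_subset_right
  have hle₂ : μ.restrict Sᶜ ≤ ν.restrict Sᶜ := by
    rw [Measure.le_iff]
    intro t ht
    rw [Measure.restrict_apply ht, Measure.restrict_apply ht]
    exact hSneg _ (ht.inter hS.compl) Set.inter_subset_right
  have hadd₁ : σ₁ + ν.restrict S = μ.restrict S := by
    rw [hσ₁def]; exact Measure.sub_add_cancel_of_le hle₁
  have hadd₂ : σ₂ + μ.restrict Sᶜ = ν.restrict Sᶜ := by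
    rw [hσ₂def]; exact Measure.sub_add_cancel_of_le hle₂
  have hσ₁univ : (σ₁ Set.univ).toReal = d := by
    rw [hσ₁def, Measure.sub_apply MeasurableSet.univ hle₁,
      Measure.restrict_apply_univ, Measure.restrict_apply_univ,
      ENNReal.toReal_sub_of_le hνSle (measure_ne_top _ _)]
    exact hd.symm
  have hσ₂univ : (σ₂ Set.univ).toReal = d := by
    rw [hσ₂def, Measure.sub_apply MeasurableSet.univ hle₂,
      Measure.restrict_apply_univ, Measure.restrict_apply_univ,
      ENNReal.toReal_sub_of_le (hSneg _ hS.compl subset_rfl) (measure_ne_top _ _)]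
    have c1 := hcompl μ hμ
    have c2 := hcompl ν hν
    rw [hd]; linarith
  -- the per-set bound
  have main : ∀ A : {s : Set E // MeasurableSet s},
      |((μ.bind (twoStepKernel P μ)) A).toReal - ((ν.bind (twoStepKernel P ν)) A).toReal|
        ≤ d * (lam₂ * (1 - d) + (1 - α₂)) := by
    rintro ⟨A, hA⟩
    set f : E → ℝ := fun x => (Qμ x A).toReal with hfdef
    set g : E → ℝ := fun x => (Qν x A).toReal with hgdef
    have hf : Measurable f := (Qμ.measurable_coe hA).ennreal_toReal
    have hg : Measurable g := (Qν.measurable_coe hA).ennreal_toReal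
    have hf01 : ∀ x, |f x| ≤ 1 := by
      intro x
      rw [abs_le]
      have h0 : (0:ℝ) ≤ f x := ENNReal.toReal_nonneg
      have h1 : f x ≤ 1 := by
        simpa using ENNReal.toReal_mono (by simp) (prob_le_one (μ := Qμ x) (s := A))
      exact ⟨by linarith, h1⟩
    have hg01 : ∀ x, |g x| ≤ 1 := by
      intro x
      rw [abs_le]
      have h0 : (0:ℝ) ≤ g x := ENNReal.toReal_nonneg
      have h1 : g x ≤ 1 := by
        simpa using ENNReal.toReal_mono (by simp) (prob_le_one (μ := Qν x) (s := A))
      exact ⟨by linarith, h1⟩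
    -- pointwise bounds
    have hQμ' : ∀ x, twoStepKernel P μ x = Qμ x := fun x => congrFun hQμ x
    have hQν' : ∀ x, twoStepKernel P ν x = Qν x := fun x => congrFun hQν x
    have hfg : ∀ x, |f x - g x| ≤ lam₂ * d := by
      intro x
      have h2 := C2 μ ν hμ hν x
      rw [htv, hQμ' x, hQν' x] at h2
      have hle := tvAux_abs_le (Qμ x) (Qν x) hA
      have : |f x - g x| ≤ tvDist (Qμ x) (Qν x) / 2 := hle
      calc |f x - g x| ≤ tvDist (Qμ x) (Qν x) / 2 := this
        _ ≤ lam₂ * (2 * d) / 2 := by linarith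
        _ = lam₂ * d := by ring
    have hfgxy : ∀ x y, |f x - g y| ≤ 1 - α₂ := by
      intro x y
      have h1 := C1 μ ν hμ hν x y
      rw [hQμ' x, hQν' y] at h1
      have hle := tvAux_abs_le (Qμ x) (Qν y) hA
      calc |f x - g y| ≤ tvDist (Qμ x) (Qν y) / 2 := hle
        _ ≤ 1 - α₂ := by linarith
    -- bind values as integrals
    have hbμ : ((μ.bind (twoStepKernel P μ)) A).toReal = ∫ x, f x ∂μ := by
      rw [hQμ, Measure.bind_apply hA (Qμ.measurable.aemeasurable)]
      exact (integral_toReal ((Qμ.measurable_coe hA).aemeasurable)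
        (ae_of_all _ fun x => measure_lt_top _ _)).symm
    have hbν : ((ν.bind (twoStepKernel P ν)) A).toReal = ∫ x, g x ∂ν := by
      rw [hQν, Measure.bind_apply hA (Qν.measurable.aemeasurable)]
      exact (integral_toReal ((Qν.measurable_coe hA).aemeasurable)
        (ae_of_all _ fun x => measure_lt_top _ _)).symm
    -- integrability
    have intf : ∀ (ρ : Measure E) [IsFiniteMeasure ρ], Integrable f ρ :=
      fun ρ _ => integrable_of_abs_le_one hf hf01 ρ
    have intg : ∀ (ρ : Measure E) [IsFiniteMeasure ρ], Integrable g ρ :=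
      fun ρ _ => integrable_of_abs_le_one hg hg01 ρ
    -- splittings
    have hsplitμ : ∫ x, f x ∂μ = ∫ x, f x ∂(μ.restrict S) + ∫ x, f x ∂(μ.restrict Sᶜ) := by
      conv_lhs => rw [← Measure.restrict_add_restrict_compl (μ := μ) hS]
      rw [integral_add_measure (intf _) (intf _)]
    have hsplitν : ∫ x, g x ∂ν = ∫ x, g x ∂(ν.restrict S) + ∫ x, g x ∂(ν.restrict Sᶜ) := by
      conv_lhs => rw [← Measure.restrict_add_restrict_compl (μ := ν) hS]
      rw [integral_add_measure (intg _) (intg _)]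
    have hsplit₁ : ∫ x, f x ∂(μ.restrict S) = ∫ x, f x ∂σ₁ + ∫ x, f x ∂(ν.restrict S) := by
      rw [← hadd₁, integral_add_measure (intf _) (intf _)]
    have hsplit₂ : ∫ x, g x ∂(ν.restrict Sᶜ) = ∫ x, g x ∂σ₂ + ∫ x, g x ∂(μ.restrict Sᶜ) := by
      rw [← hadd₂, integral_add_measure (intg _) (intg _)]
    -- bound B1
    have B1 : |∫ x, f x ∂(ν.restrict S) - ∫ x, g x ∂(ν.restrict S)|
        ≤ lam₂ * d * (ν S).toReal := by
      rw [← integral_sub (intf _) (intg _)]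
      have := norm_integral_le_of_norm_le_const (μ := ν.restrict S)
        (f := fun x => f x - g x) (C := lam₂ * d) (ae_of_all _ fun x => by
          simpa [Real.norm_eq_abs] using hfg x)
      simpa [Real.norm_eq_abs, Measure.restrict_apply_univ, measureReal_def] using this
    have B2 : |∫ x, f x ∂(μ.restrict Sᶜ) - ∫ x, g x ∂(μ.restrict Sᶜ)|
        ≤ lam₂ * d * (μ Sᶜ).toReal := by
      rw [← integral_sub (intf _) (intg _)]
      have := norm_integral_le_of_norm_le_const (μ := μ.restrict Sᶜ)
        (f := fun x => f x - g x) (C := lam₂ * d) (ae_of_all _ fun x => by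
          simpa [Real.norm_eq_abs] using hfg x)
      simpa [Real.norm_eq_abs, Measure.restrict_apply_univ, measureReal_def] using this
    -- bound B3
    have B3 : |∫ x, f x ∂σ₁ - ∫ x, g x ∂σ₂| ≤ (1 - α₂) * d := by
      have hinner : ∀ x, ∫ y, (f x - g y) ∂σ₂ = d * f x - ∫ y, g y ∂σ₂ := by
        intro x
        rw [integral_sub (integrable_const _) (intg _), integral_const, measureReal_def, hσ₂univ]
        simp [mul_comm]
      have houter : ∫ x, (∫ y, (f x - g y) ∂σ₂) ∂σ₁
          = d * (∫ x, f x ∂σ₁ - ∫ y, g y ∂σ₂) := by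
        simp_rw [hinner]
        rw [integral_sub ((intf σ₁).const_mul d) (integrable_const _),
          integral_const, measureReal_def, hσ₁univ, MeasureTheory.integral_const_mul]
        simp only [smul_eq_mul]
        ring
      have hb : |∫ x, (∫ y, (f x - g y) ∂σ₂) ∂σ₁| ≤ ((1 - α₂) * d) * d := by
        have hib : ∀ x, |∫ y, (f x - g y) ∂σ₂| ≤ (1 - α₂) * d := by
          intro x
          have := norm_integral_le_of_norm_le_const (μ := σ₂)
            (f := fun y => f x - g y) (C := 1 - α₂) (ae_of_all _ fun y => by
              simpa [Real.norm_eq_abs] using hfgxy x y)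
          simpa [Real.norm_eq_abs, measureReal_def, hσ₂univ] using this
        have := norm_integral_le_of_norm_le_const (μ := σ₁)
          (f := fun x => ∫ y, (f x - g y) ∂σ₂) (C := (1 - α₂) * d)
          (ae_of_all _ fun x => by simpa [Real.norm_eq_abs] using hib x)
        simpa [Real.norm_eq_abs, measureReal_def, hσ₁univ] using this
      rw [houter, abs_mul, abs_of_nonneg hd0] at hb
      have h1α : 0 ≤ 1 - α₂ := by linarith
      nlinarith [abs_nonneg (∫ x, f x ∂σ₁ - ∫ y, g y ∂σ₂)]
    -- combine
    have c1 := hcompl μ hμ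
    have c2 := hcompl ν hν
    have hmass : (ν S).toReal + (μ Sᶜ).toReal = 1 - d := by
      rw [hd]; linarith
    rw [hbμ, hbν, hsplitμ, hsplitν, hsplit₁, hsplit₂]
    have habs : |(∫ x, f x ∂σ₁ + ∫ x, f x ∂(ν.restrict S) + ∫ x, f x ∂(μ.restrict Sᶜ))
        - (∫ x, g x ∂(ν.restrict S) + (∫ x, g x ∂σ₂ + ∫ x, g x ∂(μ.restrict Sᶜ)))|
        ≤ lam₂ * d * (ν S).toReal + lam₂ * d * (μ Sᶜ).toReal + (1 - α₂) * d := by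
      have := abs_add_le (∫ x, f x ∂(ν.restrict S) - ∫ x, g x ∂(ν.restrict S))
        ((∫ x, f x ∂(μ.restrict Sᶜ) - ∫ x, g x ∂(μ.restrict Sᶜ))
          + (∫ x, f x ∂σ₁ - ∫ x, g x ∂σ₂))
      have h2 := abs_add_le (∫ x, f x ∂(μ.restrict Sᶜ) - ∫ x, g x ∂(μ.restrict Sᶜ))
        (∫ x, f x ∂σ₁ - ∫ x, g x ∂σ₂)
      calc |(∫ x, f x ∂σ₁ + ∫ x, f x ∂(ν.restrict S) + ∫ x, f x ∂(μ.restrict Sᶜ))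
          - (∫ x, g x ∂(ν.restrict S) + (∫ x, g x ∂σ₂ + ∫ x, g x ∂(μ.restrict Sᶜ)))|
          = |(∫ x, f x ∂(ν.restrict S) - ∫ x, g x ∂(ν.restrict S))
            + ((∫ x, f x ∂(μ.restrict Sᶜ) - ∫ x, g x ∂(μ.restrict Sᶜ))
              + (∫ x, f x ∂σ₁ - ∫ x, g x ∂σ₂))| := by ring_nf
        _ ≤ _ := by linarith [this, h2, B1, B2, B3]
    calc _ ≤ lam₂ * d * (ν S).toReal + lam₂ * d * (μ Sᶜ).toReal + (1 - α₂) * d := habs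
      _ = d * (lam₂ * (1 - d) + (1 - α₂)) := by linear_combination (lam₂ * d) * hmass
  -- conclude
  have hfin : tvDist (μ.bind (twoStepKernel P μ)) (ν.bind (twoStepKernel P ν))
      ≤ 2 * (d * (lam₂ * (1 - d) + (1 - α₂))) := by
    have hsup := ciSup_le main
    simp only [tvDist]
    linarith
  rw [htv]
  refine le_trans hfin (le_of_eq ?_)
  ring
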